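/- Let a > 0 and let φ : [0,a] → ℝ be an increasing, concave, continuous function with φ(0) = 0 and φ(a) = 1. Let h : [0,a] → ℝ be measurable with |h(t)| ≤ 1 for a.e. t ∈ [0,a], and set E₊ := {t : h(t) > 0} and E₋ := {t : h(t) < 0}. Then ‖1 + h‖_{Λ(φ)} = 1 + ∫₀^{m(E₊)} (h·χ_{E₊})*(t) dφ(t) + ∫₀^{m(E₋)} (h·χ_{E₋})*(t) dφ(a−t), and ‖1 − h‖_{Λ(φ)} = 1 + ∫₀^{m(E₋)} (h·χ_{E₋})*(t) dφ(t) + ∫₀^{m(E₊)} (h·χ_{E₊})*(t) dφ(a−t), where ∫₀^b g(t) dφ(a−t) denotes the Lebesgue–Stieltjes integral of g with respect to the decreasing function t ↦ φ(a−t) (so this term is ≤ 0 when g ≥ 0). -/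

import Mathlib

open MeasureTheory Set Filter Topology
open scoped ENNReal NNReal Classical

noncomputable section

/-- The distribution function `m {s ∈ [0,a] : τ < ‖f s‖}` of `f` on `[0,a]`. -/
def distrib {E : Type*} [NormedAddCommGroup E] (a : ℝ) (f : ℝ → E) (τ : ℝ) : ℝ≥0∞ :=
  volume {s ∈ Set.Icc (0:ℝ) a | τ < ‖f s‖}

/-- The decreasing rearrangement `f*` of `f` on `[0,a]`:
`f*(t) = inf {τ ≥ 0 : m {s ∈ [0,a] : ‖f s‖ > τ} ≤ t}`. -/
def rearr {E : Type*} [NormedAddCommGroup E] (a : ℝ) (f : ℝ → E) (t : ℝ) : ℝ :=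
  sInf {τ : ℝ | 0 ≤ τ ∧ distrib a f τ ≤ ENNReal.ofReal t}

/-- The clamp of `t : ℝ` to the interval `[0,a]`. -/
def clampIcc (a t : ℝ) : ℝ := min (max t 0) a

lemma clampIcc_mem (a t : ℝ) (ha : 0 ≤ a) : clampIcc a t ∈ Set.Icc (0:ℝ) a :=
  ⟨le_min (le_max_right t 0) ha, min_le_right _ _⟩

lemma clampIcc_mono (a : ℝ) : Monotone (clampIcc a) := fun _ _ hst =>
  min_le_min (max_le_max hst le_rfl) le_rfl

lemma clampIcc_continuous (a : ℝ) : Continuous (clampIcc a) :=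
  (continuous_id.max continuous_const).min continuous_const

/-- The Stieltjes integrator associated with an increasing continuous function `φ` on `[0,a]`
(extended to all of `ℝ` as a constant outside `[0,a]`).  Its Lebesgue–Stieltjes measure
realizes the integrals `∫₀^a ⋯ dφ(t)`. -/
def stieltjesOfOn (φ : ℝ → ℝ) (a : ℝ) : StieltjesFunction ℝ :=
  if h : 0 ≤ a ∧ MonotoneOn φ (Set.Icc 0 a) ∧ ContinuousOn φ (Set.Icc 0 a) then
    { toFun := fun t => φ (clampIcc a t)
      mono' := fun s t hst =>
        h.2.1 (clampIcc_mem a s h.1) (clampIcc_mem a t h.1) (clampIcc_mono a hst)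
      right_continuous' := fun t =>
        ((h.2.2.comp_continuous (clampIcc_continuous a)
          (fun x => clampIcc_mem a x h.1)).continuousAt).continuousWithinAt }
  else StieltjesFunction.id

/-- The Lorentz space functional `‖f‖_{Λ(φ)} = ∫₀^a f*(t) dφ(t)` (with values in `ℝ≥0∞`). -/
def eLorentzNorm {E : Type*} [NormedAddCommGroup E] (φ : ℝ → ℝ) (a : ℝ) (f : ℝ → E) : ℝ≥0∞ :=
  ∫⁻ t in Set.Ioc (0:ℝ) a, ENNReal.ofReal (rearr a f t) ∂(stieltjesOfOn φ a).measure

/-- Membership in the Lorentz space `Λ(φ)[0,a]`. -/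
def MemLorentz {E : Type*} [NormedAddCommGroup E] [MeasurableSpace E]
    (φ : ℝ → ℝ) (a : ℝ) (f : ℝ → E) : Prop :=
  Measurable f ∧ eLorentzNorm φ a f < ⊤

/-- The Hardy–Lorentz space functional
`‖f‖_{H(Λ(φ))} = sup_{0 ≤ r < 1} ‖t ↦ f (r e^{it})‖_{Λ(φ)}` for functions on the unit disk. -/
def eHLNorm (φ : ℝ → ℝ) (f : ℂ → ℂ) : ℝ≥0∞ :=
  ⨆ r ∈ Set.Ico (0:ℝ) 1,
    eLorentzNorm φ (2 * Real.pi)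
      (fun t : ℝ => f (Complex.ofReal r * Complex.exp (Complex.I * Complex.ofReal t)))

/-- The classical `H¹` functional `‖f‖_{H¹} = sup_{0 ≤ r < 1} (1/(2π)) ∫₀^{2π} |f(r e^{it})| dt`. -/
def eH1Norm (f : ℂ → ℂ) : ℝ≥0∞ :=
  ⨆ r ∈ Set.Ico (0:ℝ) 1,
    (ENNReal.ofReal (2 * Real.pi))⁻¹ *
      ∫⁻ t in Set.Ioc (0:ℝ) (2 * Real.pi),
        ENNReal.ofReal ‖f (Complex.ofReal r * Complex.exp (Complex.I * Complex.ofReal t))‖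

/-- `fb` is the boundary (radial limit) function of `f`: for a.e. `t ∈ [0,2π]`,
`f(r e^{it}) → fb t` as `r → 1⁻`.  (For `f ∈ H¹` such a function exists and coincides a.e.
with the nontangential limit `f̃`.) -/
def HasRadialLimits (f : ℂ → ℂ) (fb : ℝ → ℂ) : Prop :=
  ∀ᵐ t ∂(volume.restrict (Set.Icc (0:ℝ) (2 * Real.pi))),
    Filter.Tendsto (fun r : ℝ => f (Complex.ofReal r * Complex.exp (Complex.I * Complex.ofReal t)))
      (nhdsWithin 1 (Set.Iio 1)) (nhds (fb t))

/-- `f` (with boundary function `fb`) is an outer function: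
`f` is non-null and `ln |f 0| = (1/(2π)) ∫₀^{2π} ln |fb s| ds`. -/
def IsOuter (f : ℂ → ℂ) (fb : ℝ → ℂ) : Prop :=
  (∃ z ∈ Metric.ball (0:ℂ) 1, f z ≠ 0) ∧
    Real.log ‖f 0‖ =
      (1 / (2 * Real.pi)) * ∫ s in Set.Ioc (0:ℝ) (2 * Real.pi), Real.log ‖fb s‖

/-- The set `E₊ = {t ∈ [0,a] : h t > 0}`. -/
def posSet (a : ℝ) (h : ℝ → ℝ) : Set ℝ := {t ∈ Set.Icc (0:ℝ) a | 0 < h t}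

/-- The set `E₋ = {t ∈ [0,a] : h t < 0}`. -/
def negSet (a : ℝ) (h : ℝ → ℝ) : Set ℝ := {t ∈ Set.Icc (0:ℝ) a | h t < 0}

section Aux

variable {E : Type*} [NormedAddCommGroup E]

lemma distrib_le_ofReal (a : ℝ) (f : ℝ → E) (τ : ℝ) :
    distrib a f τ ≤ ENNReal.ofReal a := by
  calc distrib a f τ ≤ volume (Set.Icc (0:ℝ) a) := measure_mono (fun s hs => hs.1)
  _ = ENNReal.ofReal a := by rw [Real.volume_Icc, sub_zero]

lemma distrib_ne_top (a : ℝ) (f : ℝ → E) (τ : ℝ) : distrib a f τ ≠ ⊤ :=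
  ((distrib_le_ofReal a f τ).trans_lt ENNReal.ofReal_lt_top).ne

lemma distrib_anti (a : ℝ) (f : ℝ → E) : Antitone (distrib a f) :=
  fun _ _ h => measure_mono (fun s hs => ⟨hs.1, lt_of_le_of_lt h hs.2⟩)

lemma distrib_iSup (a : ℝ) (f : ℝ → E) (τ : ℝ) :
    distrib a f τ = ⨆ n : ℕ, distrib a f (τ + 1/(n+1)) := by
  have hU : {s ∈ Set.Icc (0:ℝ) a | τ < ‖f s‖} =
      ⋃ n : ℕ, {s ∈ Set.Icc (0:ℝ) a | τ + 1/(n+1) < ‖f s‖} := by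
    ext s
    simp only [Set.mem_setOf_eq, Set.mem_iUnion]
    constructor
    · rintro ⟨hs, hτ⟩
      obtain ⟨n, hn⟩ := exists_nat_one_div_lt (sub_pos.2 hτ)
      exact ⟨n, hs, by linarith⟩
    · rintro ⟨n, hs, hn⟩
      have hp : (0:ℝ) < 1/((n:ℝ)+1) := by positivity
      exact ⟨hs, by linarith⟩
  rw [distrib, hU]
  refine Monotone.measure_iUnion (fun n m hnm => ?_)
  intro s hs
  refine ⟨hs.1, lt_of_le_of_lt ?_ hs.2⟩
  have h1 : 1/((m:ℝ)+1) ≤ 1/((n:ℝ)+1) := by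
    apply one_div_le_one_div_of_le (by positivity)
    have : (n:ℝ) ≤ m := Nat.cast_le.2 hnm
    linarith
  linarith

lemma rearr_nonneg (a : ℝ) (f : ℝ → E) (t : ℝ) : 0 ≤ rearr a f t :=
  Real.sInf_nonneg (fun _ hτ => hτ.1)

lemma rearr_le_iff (a : ℝ) (f : ℝ → E) {c : ℝ} (hc : 0 ≤ c)
    (hfc : distrib a f c = 0) {t τ : ℝ} (hτ : 0 ≤ τ) :
    rearr a f t ≤ τ ↔ distrib a f τ ≤ ENNReal.ofReal t := by
  have hne : {τ' : ℝ | 0 ≤ τ' ∧ distrib a f τ' ≤ ENNReal.ofReal t}.Nonempty :=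
    ⟨c, hc, by rw [hfc]; exact zero_le⟩
  constructor
  · intro hle
    rw [distrib_iSup a f τ]
    refine iSup_le fun n => ?_
    have hp : (0:ℝ) < 1/((n:ℝ)+1) := by positivity
    obtain ⟨τ', hτ'mem, hτ'lt⟩ := exists_lt_of_csInf_lt hne
      (show sInf {τ' : ℝ | 0 ≤ τ' ∧ distrib a f τ' ≤ ENNReal.ofReal t} < τ + 1/(n+1) by
        exact lt_of_le_of_lt hle (by linarith))
    exact le_trans (distrib_anti a f hτ'lt.le) hτ'mem.2
  · intro hle
    exact csInf_le ⟨0, fun x hx => hx.1⟩ ⟨hτ, hle⟩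

lemma lt_rearr_iff (a : ℝ) (f : ℝ → E) {c : ℝ} (hc : 0 ≤ c)
    (hfc : distrib a f c = 0) {t τ : ℝ} (hτ : 0 ≤ τ) :
    τ < rearr a f t ↔ ENNReal.ofReal t < distrib a f τ := by
  rw [← not_le, ← not_le, rearr_le_iff a f hc hfc hτ]

lemma rearr_anti (a : ℝ) (f : ℝ → E) {c : ℝ} (hc : 0 ≤ c) (hfc : distrib a f c = 0) :
    Antitone (rearr a f) := fun t₁ t₂ h =>
  csInf_le_csInf ⟨0, fun x hx => hx.1⟩ ⟨c, hc, by rw [hfc]; exact zero_le⟩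
    (fun τ hτ => ⟨hτ.1, le_trans hτ.2 (ENNReal.ofReal_le_ofReal h)⟩)

lemma setLIntegral_rearr (a : ℝ) (f : ℝ → E) {c : ℝ} (hc : 0 ≤ c) (hfc : distrib a f c = 0)
    {b : ℝ} (hDb : ∀ τ, 0 < τ → (distrib a f τ).toReal ≤ b)
    (μ : Measure ℝ) :
    ∫⁻ t in Set.Ioc 0 b, ENNReal.ofReal (rearr a f t) ∂μ =
      ∫⁻ τ in Set.Ioi 0, μ (Set.Ioo 0 ((distrib a f τ).toReal)) ∂volume := by
  rw [lintegral_eq_lintegral_meas_lt (μ.restrict (Set.Ioc 0 b))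
      (Eventually.of_forall fun t => rearr_nonneg a f t)
      ((rearr_anti a f hc hfc).measurable.aemeasurable)]
  refine setLIntegral_congr_fun measurableSet_Ioi (fun τ hτ => ?_)
  have hτ' : (0:ℝ) < τ := hτ
  rw [Measure.restrict_apply (measurableSet_lt measurable_const
      (rearr_anti a f hc hfc).measurable)]
  congr 1
  ext t
  simp only [Set.mem_inter_iff, Set.mem_setOf_eq, Set.mem_Ioc, Set.mem_Ioo]
  constructor
  · rintro ⟨hlt, ht0, htb⟩
    rw [lt_rearr_iff a f hc hfc hτ'.le] at hlt
    exact ⟨ht0, (ENNReal.ofReal_lt_iff_lt_toReal ht0.le (distrib_ne_top a f τ)).1 hlt⟩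
  · rintro ⟨ht0, htD⟩
    refine ⟨?_, ht0, le_trans htD.le (hDb τ hτ')⟩
    rw [lt_rearr_iff a f hc hfc hτ'.le]
    exact (ENNReal.ofReal_lt_iff_lt_toReal ht0.le (distrib_ne_top a f τ)).2 htD

end Aux

section St

variable {φ : ℝ → ℝ} {a : ℝ}

lemma clampIcc_of_mem {t : ℝ} (ht : t ∈ Set.Icc 0 a) : clampIcc a t = t := by
  rw [clampIcc, max_eq_left ht.1, min_eq_left ht.2]

lemma stieltjesOfOn_apply (ha : 0 ≤ a)
    (hmono : MonotoneOn φ (Set.Icc 0 a)) (hcont : ContinuousOn φ (Set.Icc 0 a)) (t : ℝ) :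
    stieltjesOfOn φ a t = φ (clampIcc a t) := by
  rw [stieltjesOfOn, dif_pos ⟨ha, hmono, hcont⟩]

lemma stieltjesOfOn_continuous (ha : 0 ≤ a)
    (hmono : MonotoneOn φ (Set.Icc 0 a)) (hcont : ContinuousOn φ (Set.Icc 0 a)) :
    Continuous (stieltjesOfOn φ a) := by
  have : (stieltjesOfOn φ a : ℝ → ℝ) = fun t => φ (clampIcc a t) := by
    funext t; exact stieltjesOfOn_apply ha hmono hcont t
  rw [this]
  exact hcont.comp_continuous (clampIcc_continuous a) (fun x => clampIcc_mem a x ha)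

lemma stieltjesOfOn_measure_Ioo (ha : 0 ≤ a)
    (hmono : MonotoneOn φ (Set.Icc 0 a)) (hcont : ContinuousOn φ (Set.Icc 0 a))
    {d : ℝ} (hd0 : 0 ≤ d) (hda : d ≤ a) :
    (stieltjesOfOn φ a).measure (Set.Ioo 0 d) = ENNReal.ofReal (φ d - φ 0) := by
  rw [StieltjesFunction.measure_Ioo]
  have hL : Function.leftLim (stieltjesOfOn φ a) d = stieltjesOfOn φ a d :=
    leftLim_eq_of_tendsto
      (((stieltjesOfOn_continuous ha hmono hcont).tendsto d).mono_left nhdsWithin_le_nhds)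
  rw [hL, stieltjesOfOn_apply ha hmono hcont, stieltjesOfOn_apply ha hmono hcont,
    clampIcc_of_mem ⟨hd0, hda⟩, clampIcc_of_mem ⟨le_refl 0, ha⟩]

end St

lemma main_identity (a : ℝ) (ha : 0 < a) (φ : ℝ → ℝ)
    (hcont : ContinuousOn φ (Set.Icc 0 a))
    (hmono : MonotoneOn φ (Set.Icc 0 a))
    (hφ0 : φ 0 = 0) (hφa : φ a = 1)
    (h : ℝ → ℝ) (hm : Measurable h)
    (hb : ∀ᵐ t ∂(volume.restrict (Set.Icc (0:ℝ) a)), |h t| ≤ 1) :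
    eLorentzNorm φ a (fun t => 1 + h t) +
        (∫⁻ t in Set.Ioc (0:ℝ) ((volume (negSet a h)).toReal),
          ENNReal.ofReal (rearr a ((negSet a h).indicator h) t)
            ∂(stieltjesOfOn (fun s => -φ (a - s)) a).measure) =
      1 + ∫⁻ t in Set.Ioc (0:ℝ) ((volume (posSet a h)).toReal),
          ENNReal.ofReal (rearr a ((posSet a h).indicator h) t)
            ∂(stieltjesOfOn φ a).measure := by
  have hb' : ∀ᵐ s ∂(volume : Measure ℝ), s ∈ Set.Icc (0:ℝ) a → |h s| ≤ 1 :=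
    (ae_restrict_iff' measurableSet_Icc).1 hb
  -- the bad set is null
  have key0 : volume {s | s ∈ Set.Icc (0:ℝ) a ∧ 1 < |h s|} = 0 := by
    have h2 := hb'
    rw [ae_iff] at h2
    refine measure_mono_null ?_ h2
    intro s hs
    simp only [Set.mem_setOf_eq, Classical.not_imp, not_le]
    exact ⟨hs.1, hs.2⟩
  -- vanishing of distribution functions at high levels
  have hDp1 : distrib a ((posSet a h).indicator h) 1 = 0 := by
    refine measure_mono_null ?_ key0
    intro s hs
    refine ⟨hs.1, lt_of_lt_of_le hs.2 ?_⟩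
    rw [Real.norm_eq_abs] at *
    exact (le_trans (norm_indicator_le_norm_self h s) (le_of_eq (Real.norm_eq_abs _)))
  have hDn1 : distrib a ((negSet a h).indicator h) 1 = 0 := by
    refine measure_mono_null ?_ key0
    intro s hs
    refine ⟨hs.1, lt_of_lt_of_le hs.2 ?_⟩
    exact (le_trans (norm_indicator_le_norm_self h s) (le_of_eq (Real.norm_eq_abs _)))
  have hD12 : distrib a (fun t => 1 + h t) 2 = 0 := by
    refine measure_mono_null ?_ key0
    intro s hs
    refine ⟨hs.1, ?_⟩
    have h2 := hs.2
    rw [Real.norm_eq_abs] at h2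
    have habs : |1 + h s| ≤ 1 + |h s| := by
      calc |1 + h s| ≤ |(1:ℝ)| + |h s| := abs_add_le 1 (h s)
      _ = 1 + |h s| := by rw [abs_one]
    linarith
  -- bounds
  have htoReal_le_a : ∀ (f : ℝ → ℝ) (τ : ℝ), (distrib a f τ).toReal ≤ a := by
    intro f τ
    calc (distrib a f τ).toReal ≤ (ENNReal.ofReal a).toReal :=
      ENNReal.toReal_mono ENNReal.ofReal_ne_top (distrib_le_ofReal a f τ)
    _ = a := ENNReal.toReal_ofReal ha.le
  have hIccfin : volume (Set.Icc (0:ℝ) a) ≠ ⊤ := by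
    rw [Real.volume_Icc]; exact ENNReal.ofReal_ne_top
  have hmp_ne : volume (posSet a h) ≠ ⊤ :=
    (lt_of_le_of_lt (measure_mono (fun s hs => hs.1)) (lt_top_iff_ne_top.2 hIccfin)).ne
  have hmn_ne : volume (negSet a h) ≠ ⊤ :=
    (lt_of_le_of_lt (measure_mono (fun s hs => hs.1)) (lt_top_iff_ne_top.2 hIccfin)).ne
  have hDp_le : ∀ τ, 0 < τ →
      (distrib a ((posSet a h).indicator h) τ).toReal ≤ (volume (posSet a h)).toReal := by
    intro τ hτ
    refine ENNReal.toReal_mono hmp_ne (measure_mono ?_)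
    intro s hs
    by_contra hsp
    have h2 := hs.2
    rw [Set.indicator_of_notMem hsp, norm_zero] at h2
    exact absurd h2 (not_lt.2 hτ.le)
  have hDn_le : ∀ τ, 0 < τ →
      (distrib a ((negSet a h).indicator h) τ).toReal ≤ (volume (negSet a h)).toReal := by
    intro τ hτ
    refine ENNReal.toReal_mono hmn_ne (measure_mono ?_)
    intro s hs
    by_contra hsp
    have h2 := hs.2
    rw [Set.indicator_of_notMem hsp, norm_zero] at h2
    exact absurd h2 (not_lt.2 hτ.le)
  -- layer cake representations
  have hA : (∫⁻ t in Set.Ioc (0:ℝ) ((volume (posSet a h)).toReal),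
        ENNReal.ofReal (rearr a ((posSet a h).indicator h) t) ∂(stieltjesOfOn φ a).measure)
      = ∫⁻ τ in Set.Ioi (0:ℝ),
          ENNReal.ofReal (φ ((distrib a ((posSet a h).indicator h) τ).toReal)) ∂volume := by
    rw [setLIntegral_rearr a _ zero_le_one hDp1 hDp_le _]
    refine setLIntegral_congr_fun measurableSet_Ioi (fun τ _ => ?_)
    rw [stieltjesOfOn_measure_Ioo ha.le hmono hcont ENNReal.toReal_nonneg (htoReal_le_a _ τ),
      hφ0, sub_zero]
  have hNorm : eLorentzNorm φ a (fun t => 1 + h t)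
      = ∫⁻ τ in Set.Ioi (0:ℝ),
          ENNReal.ofReal (φ ((distrib a (fun t => 1 + h t) τ).toReal)) ∂volume := by
    rw [eLorentzNorm, setLIntegral_rearr a _ (by norm_num : (0:ℝ) ≤ 2) hD12
      (fun τ _ => htoReal_le_a _ τ)]
    refine setLIntegral_congr_fun measurableSet_Ioi (fun τ _ => ?_)
    rw [stieltjesOfOn_measure_Ioo ha.le hmono hcont ENNReal.toReal_nonneg (htoReal_le_a _ τ),
      hφ0, sub_zero]
  -- the reversed integrator
  have hmono' : MonotoneOn (fun s => -φ (a - s)) (Set.Icc 0 a) := by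
    intro x hx y hy hxy
    have h1 : a - y ∈ Set.Icc (0:ℝ) a := ⟨by linarith [hy.2], by linarith [hy.1]⟩
    have h2 : a - x ∈ Set.Icc (0:ℝ) a := ⟨by linarith [hx.2], by linarith [hx.1]⟩
    simp only [neg_le_neg_iff]
    exact hmono h1 h2 (by linarith)
  have hcont' : ContinuousOn (fun s => -φ (a - s)) (Set.Icc 0 a) := by
    refine ContinuousOn.neg ?_
    refine ContinuousOn.comp hcont ((continuous_const.sub continuous_id).continuousOn) ?_
    intro x hx
    exact ⟨by simp; linarith [hx.2], by simp; linarith [hx.1]⟩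
  have hB : (∫⁻ t in Set.Ioc (0:ℝ) ((volume (negSet a h)).toReal),
        ENNReal.ofReal (rearr a ((negSet a h).indicator h) t)
          ∂(stieltjesOfOn (fun s => -φ (a - s)) a).measure)
      = ∫⁻ τ in Set.Ioi (0:ℝ),
          ENNReal.ofReal (1 - φ (a - (distrib a ((negSet a h).indicator h) τ).toReal))
            ∂volume := by
    rw [setLIntegral_rearr a _ zero_le_one hDn1 hDn_le _]
    refine setLIntegral_congr_fun measurableSet_Ioi (fun τ _ => ?_)
    rw [stieltjesOfOn_measure_Ioo ha.le hmono' hcont' ENNReal.toReal_nonneg (htoReal_le_a _ τ)]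
    congr 1
    have : a - (0:ℝ) = a := sub_zero a
    simp only [this, hφa]
    ring
  -- C1 : shifting by one on the positive part
  have hC1 : ∀ σ : ℝ, 0 ≤ σ →
      distrib a (fun t => 1 + h t) (σ + 1) = distrib a ((posSet a h).indicator h) σ := by
    intro σ hσ
    apply measure_congr
    filter_upwards [hb'] with s hs
    simp only [Set.mem_setOf_eq, eq_iff_iff, Real.norm_eq_abs]
    constructor
    · rintro ⟨h1, h2⟩
      obtain ⟨hl, hr⟩ := abs_le.1 (hs h1)
      rw [abs_of_nonneg (by linarith : (0:ℝ) ≤ 1 + h s)] at h2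
      have hhs : σ < h s := by linarith
      have hmem : s ∈ posSet a h := ⟨h1, lt_of_le_of_lt hσ hhs⟩
      refine ⟨h1, ?_⟩
      rw [Set.indicator_of_mem hmem, abs_of_pos (lt_of_le_of_lt hσ hhs)]
      exact hhs
    · rintro ⟨h1, h2⟩
      obtain ⟨hl, hr⟩ := abs_le.1 (hs h1)
      by_cases hmem : s ∈ posSet a h
      · rw [Set.indicator_of_mem hmem, abs_of_pos hmem.2] at h2
        refine ⟨h1, ?_⟩
        rw [abs_of_nonneg (by linarith : (0:ℝ) ≤ 1 + h s)]
        linarith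
      · rw [Set.indicator_of_notMem hmem, abs_zero] at h2
        exact absurd h2 (not_lt.2 hσ)
  -- change of variables on `Ioi 1`
  have hCOV : (∫⁻ τ in Set.Ioi (1:ℝ),
      ENNReal.ofReal (φ ((distrib a (fun t => 1 + h t) τ).toReal)) ∂volume)
      = ∫⁻ τ in Set.Ioi (0:ℝ),
          ENNReal.ofReal (φ ((distrib a ((posSet a h).indicator h) τ).toReal)) ∂volume := by
    have hmp : MeasurePreserving (fun x : ℝ => x + 1) volume volume :=
      measurePreserving_add_right volume 1
    have hemb : MeasurableEmbedding (fun x : ℝ => x + 1) :=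
      (MeasurableEquiv.addRight (1:ℝ)).measurableEmbedding
    have h1 := hmp.setLIntegral_comp_preimage_emb hemb
      (fun τ => ENNReal.ofReal (φ ((distrib a (fun t => 1 + h t) τ).toReal))) (Set.Ioi 1)
    have hpre : (fun x : ℝ => x + 1) ⁻¹' Set.Ioi 1 = Set.Ioi 0 := by
      ext x
      simp only [Set.mem_preimage, Set.mem_Ioi]
      constructor <;> intro hx <;> linarith
    rw [hpre] at h1
    rw [← h1]
    refine setLIntegral_congr_fun measurableSet_Ioi (fun σ hσ => ?_)
    have hσ' : (0:ℝ) < σ := hσ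
    rw [hC1 σ hσ'.le]
  -- the level-set a.e. statement
  have hlevel : ∀ᵐ τ ∂(volume : Measure ℝ),
      volume {s | s ∈ Set.Icc (0:ℝ) a ∧ h s = τ - 1} = 0 := by
    have hC : {c : ℝ | 0 < (volume.restrict (Set.Icc (0:ℝ) a)) {s | h s = c}}.Countable :=
      Measure.countable_meas_level_set_pos hm
    have himg : {τ : ℝ | τ - 1 ∈
        {c : ℝ | 0 < (volume.restrict (Set.Icc (0:ℝ) a)) {s | h s = c}}}.Countable := by
      have heq : {τ : ℝ | τ - 1 ∈
          {c : ℝ | 0 < (volume.restrict (Set.Icc (0:ℝ) a)) {s | h s = c}}}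
          = (fun c => c + 1) ''
            {c : ℝ | 0 < (volume.restrict (Set.Icc (0:ℝ) a)) {s | h s = c}} := by
        ext τ
        constructor
        · intro hτ; exact ⟨τ - 1, hτ, by ring⟩
        · rintro ⟨c, hc, rfl⟩; simpa using hc
      rw [heq]; exact hC.image _
    have hnull : volume {τ : ℝ | τ - 1 ∈
        {c : ℝ | 0 < (volume.restrict (Set.Icc (0:ℝ) a)) {s | h s = c}}} = 0 :=
      himg.measure_zero _
    have hae := (measure_eq_zero_iff_ae_notMem (μ := (volume : Measure ℝ))).1 hnull
    filter_upwards [hae] with τ hτ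
    have h0 : (volume.restrict (Set.Icc (0:ℝ) a)) {s | h s = τ - 1} = 0 := by
      by_contra hne
      exact hτ (pos_iff_ne_zero.2 hne)
    have hms : MeasurableSet {s : ℝ | h s = τ - 1} := hm (measurableSet_singleton (τ - 1))
    rw [Measure.restrict_apply hms] at h0
    refine measure_mono_null ?_ h0
    intro s hs
    exact ⟨hs.2, hs.1⟩
  -- C2 : the identity on (0,1]
  have hC2 : ∀ τ : ℝ, τ ∈ Set.Ioc (0:ℝ) 1 →
      volume {s | s ∈ Set.Icc (0:ℝ) a ∧ h s = τ - 1} = 0 →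
      (distrib a (fun t => 1 + h t) τ).toReal
        = a - (distrib a ((negSet a h).indicator h) (1 - τ)).toReal := by
    intro τ hτ hlev
    have step1 : distrib a (fun t => 1 + h t) τ
        = volume {s | s ∈ Set.Icc (0:ℝ) a ∧ τ - 1 < h s} := by
      apply measure_congr
      filter_upwards [hb'] with s hs
      simp only [Set.mem_setOf_eq, eq_iff_iff, Real.norm_eq_abs]
      constructor
      · rintro ⟨h1, h2⟩
        obtain ⟨hl, hr⟩ := abs_le.1 (hs h1)
        rw [abs_of_nonneg (by linarith : (0:ℝ) ≤ 1 + h s)] at h2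
        exact ⟨h1, by linarith⟩
      · rintro ⟨h1, h2⟩
        obtain ⟨hl, hr⟩ := abs_le.1 (hs h1)
        refine ⟨h1, ?_⟩
        rw [abs_of_nonneg (by linarith : (0:ℝ) ≤ 1 + h s)]
        linarith
    have step3 : distrib a ((negSet a h).indicator h) (1 - τ)
        = volume {s | s ∈ Set.Icc (0:ℝ) a ∧ h s < τ - 1} := by
      have hset : {s ∈ Set.Icc (0:ℝ) a | 1 - τ < ‖(negSet a h).indicator h s‖}
          = {s | s ∈ Set.Icc (0:ℝ) a ∧ h s < τ - 1} := by
        ext s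
        simp only [Set.mem_setOf_eq, Real.norm_eq_abs]
        constructor
        · rintro ⟨h1, h2⟩
          by_cases hmem : s ∈ negSet a h
          · rw [Set.indicator_of_mem hmem, abs_of_neg hmem.2] at h2
            exact ⟨h1, by linarith⟩
          · rw [Set.indicator_of_notMem hmem, abs_zero] at h2
            exact absurd h2 (not_lt.2 (by linarith [hτ.2]))
        · rintro ⟨h1, h2⟩
          have hneg : s ∈ negSet a h := ⟨h1, by linarith [hτ.2]⟩
          refine ⟨h1, ?_⟩
          rw [Set.indicator_of_mem hneg, abs_of_neg hneg.2]
          linarith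
      rw [distrib, hset]
    have hle_lt : volume {s | s ∈ Set.Icc (0:ℝ) a ∧ h s ≤ τ - 1}
        = volume {s | s ∈ Set.Icc (0:ℝ) a ∧ h s < τ - 1} := by
      apply le_antisymm
      · have hsub : {s | s ∈ Set.Icc (0:ℝ) a ∧ h s ≤ τ - 1}
            ⊆ {s | s ∈ Set.Icc (0:ℝ) a ∧ h s < τ - 1}
              ∪ {s | s ∈ Set.Icc (0:ℝ) a ∧ h s = τ - 1} := by
          intro s hs
          rcases lt_or_eq_of_le hs.2 with hlt | heq
          · exact Or.inl ⟨hs.1, hlt⟩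
          · exact Or.inr ⟨hs.1, heq⟩
        refine le_trans (measure_mono hsub) (le_trans (measure_union_le _ _) ?_)
        rw [hlev, add_zero]
      · exact measure_mono (fun s hs => ⟨hs.1, hs.2.le⟩)
    have hmeas2 : MeasurableSet {s | s ∈ Set.Icc (0:ℝ) a ∧ h s ≤ τ - 1} :=
      (measurableSet_Icc.inter (hm measurableSet_Iic))
    have hdisj : Disjoint {s | s ∈ Set.Icc (0:ℝ) a ∧ τ - 1 < h s}
        {s | s ∈ Set.Icc (0:ℝ) a ∧ h s ≤ τ - 1} := by
      rw [Set.disjoint_left]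
      rintro s ⟨h1, h2⟩ ⟨h1', h2'⟩
      exact absurd h2 (not_lt.2 h2')
    have hunion : {s | s ∈ Set.Icc (0:ℝ) a ∧ τ - 1 < h s}
        ∪ {s | s ∈ Set.Icc (0:ℝ) a ∧ h s ≤ τ - 1} = Set.Icc (0:ℝ) a := by
      ext s
      simp only [Set.mem_union, Set.mem_setOf_eq]
      constructor
      · rintro (⟨h1, _⟩ | ⟨h1, _⟩) <;> exact h1
      · intro h1
        rcases lt_or_ge (τ - 1) (h s) with hlt | hle
        · exact Or.inl ⟨h1, hlt⟩
        · exact Or.inr ⟨h1, hle⟩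
    have step2 : distrib a (fun t => 1 + h t) τ
        + volume {s | s ∈ Set.Icc (0:ℝ) a ∧ h s ≤ τ - 1} = ENNReal.ofReal a := by
      rw [step1, ← measure_union hdisj hmeas2, hunion, Real.volume_Icc, sub_zero]
    have hfin : distrib a (fun t => 1 + h t) τ
        = ENNReal.ofReal a - distrib a ((negSet a h).indicator h) (1 - τ) := by
      rw [step3, ← hle_lt]
      refine ENNReal.eq_sub_of_add_eq ?_ step2
      exact (lt_of_le_of_lt (measure_mono (fun s hs => hs.1))
        (lt_top_iff_ne_top.2 hIccfin)).ne
    rw [hfin, ENNReal.toReal_sub_of_le (distrib_le_ofReal a _ (1 - τ)) ENNReal.ofReal_ne_top,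
      ENNReal.toReal_ofReal ha.le]
  -- rewrite the Ioc part of the norm
  have hNormIoc : (∫⁻ τ in Set.Ioc (0:ℝ) 1,
      ENNReal.ofReal (φ ((distrib a (fun t => 1 + h t) τ).toReal)) ∂volume)
      = ∫⁻ τ in Set.Ioc (0:ℝ) 1,
          ENNReal.ofReal (φ (a - (distrib a ((negSet a h).indicator h) (1 - τ)).toReal))
            ∂volume := by
    apply lintegral_congr_ae
    filter_upwards [ae_restrict_of_ae hlevel, ae_restrict_mem measurableSet_Ioc] with τ h1 h2
    rw [hC2 τ h2 h1]
  -- reflection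
  have hrefl : (∫⁻ τ in Set.Ioc (0:ℝ) 1,
      ENNReal.ofReal (φ (a - (distrib a ((negSet a h).indicator h) (1 - τ)).toReal)) ∂volume)
      = ∫⁻ τ in Set.Ioc (0:ℝ) 1,
          ENNReal.ofReal (φ (a - (distrib a ((negSet a h).indicator h) τ).toReal)) ∂volume := by
    have hmp : MeasurePreserving (fun x : ℝ => 1 - x) volume volume :=
      Measure.measurePreserving_sub_left volume 1
    have hemb : MeasurableEmbedding (fun x : ℝ => 1 - x) :=
      (MeasurableEquiv.subLeft (1:ℝ)).measurableEmbedding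
    have h1 := hmp.setLIntegral_comp_preimage_emb hemb
      (fun τ => ENNReal.ofReal (φ (a - (distrib a ((negSet a h).indicator h) τ).toReal)))
      (Set.Ioc 0 1)
    have hpre : (fun x : ℝ => 1 - x) ⁻¹' Set.Ioc (0:ℝ) 1 = Set.Ico (0:ℝ) 1 := by
      ext x
      simp only [Set.mem_preimage, Set.mem_Ioc, Set.mem_Ico]
      constructor <;> intro hx <;> exact ⟨by linarith [hx.1, hx.2], by linarith [hx.1, hx.2]⟩
    rw [hpre] at h1
    rw [← h1]
    exact setLIntegral_congr (Ico_ae_eq_Ioc.symm)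
  -- B over Ioi 1 vanishes
  have hBIoi : (∫⁻ τ in Set.Ioi (1:ℝ),
      ENNReal.ofReal (1 - φ (a - (distrib a ((negSet a h).indicator h) τ).toReal)) ∂volume)
      = 0 := by
    refine (setLIntegral_congr_fun measurableSet_Ioi
      (fun τ hτ => ?_)).trans lintegral_zero
    have hτ1 : (1:ℝ) ≤ τ := le_of_lt hτ
    have hDn0 : distrib a ((negSet a h).indicator h) τ = 0 :=
      le_antisymm (le_trans (distrib_anti a _ hτ1) (le_of_eq hDn1)) zero_le
    rw [hDn0]
    simp [hφa]
  -- values of φ are in [0,1]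
  have hφmem : ∀ {y : ℝ}, y ∈ Set.Icc (0:ℝ) a → 0 ≤ φ y ∧ φ y ≤ 1 := by
    intro y hy
    constructor
    · rw [← hφ0]; exact hmono ⟨le_rfl, ha.le⟩ hy hy.1
    · rw [← hφa]; exact hmono hy ⟨ha.le, le_rfl⟩ hy.2
  have hval : ∀ τ : ℝ, a - (distrib a ((negSet a h).indicator h) τ).toReal
      ∈ Set.Icc (0:ℝ) a := by
    intro τ
    constructor
    · linarith [htoReal_le_a ((negSet a h).indicator h) τ]
    · linarith [ENNReal.toReal_nonneg (a := distrib a ((negSet a h).indicator h) τ)]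
  -- the sum over (0,1] equals 1
  have hsum : (∫⁻ τ in Set.Ioc (0:ℝ) 1,
        ENNReal.ofReal (φ (a - (distrib a ((negSet a h).indicator h) τ).toReal)) ∂volume)
      + (∫⁻ τ in Set.Ioc (0:ℝ) 1,
        ENNReal.ofReal (1 - φ (a - (distrib a ((negSet a h).indicator h) τ).toReal)) ∂volume)
      = 1 := by
    have hmonoDn : Monotone
        (fun τ => a - (distrib a ((negSet a h).indicator h) τ).toReal) := by
      intro x y hxy
      have h1 := distrib_anti a ((negSet a h).indicator h) hxy
      have h2 := ENNReal.toReal_mono (distrib_ne_top a ((negSet a h).indicator h) x) h1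
      simp only []
      linarith
    have hmono2 : Monotone
        (fun τ => φ (a - (distrib a ((negSet a h).indicator h) τ).toReal)) :=
      fun x y hxy => hmono (hval x) (hval y) (hmonoDn hxy)
    have hmeasφ : Measurable
        (fun τ => ENNReal.ofReal (φ (a - (distrib a ((negSet a h).indicator h) τ).toReal))) :=
      ENNReal.measurable_ofReal.comp hmono2.measurable
    rw [← lintegral_add_left hmeasφ]
    have hptw : ∀ τ : ℝ, τ ∈ Set.Ioc (0:ℝ) 1 →
        (ENNReal.ofReal (φ (a - (distrib a ((negSet a h).indicator h) τ).toReal))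
          + ENNReal.ofReal (1 - φ (a - (distrib a ((negSet a h).indicator h) τ).toReal)))
        = 1 := by
      intro τ _
      have hmem := hφmem (hval τ)
      rw [← ENNReal.ofReal_add hmem.1 (by linarith [hmem.2])]
      have heq : φ (a - (distrib a ((negSet a h).indicator h) τ).toReal)
          + (1 - φ (a - (distrib a ((negSet a h).indicator h) τ).toReal)) = 1 := by ring
      rw [heq, ENNReal.ofReal_one]
    rw [setLIntegral_congr_fun measurableSet_Ioc hptw]
    rw [setLIntegral_const, one_mul, Real.volume_Ioc]
    norm_num
  -- split lemma
  have hdisj10 : Disjoint (Set.Ioc (0:ℝ) 1) (Set.Ioi (1:ℝ)) := Set.Ioc_disjoint_Ioi le_rfl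
  have hsplit01 : ∀ F : ℝ → ℝ≥0∞, (∫⁻ τ in Set.Ioi (0:ℝ), F τ ∂volume)
      = (∫⁻ τ in Set.Ioc (0:ℝ) 1, F τ ∂volume) + ∫⁻ τ in Set.Ioi (1:ℝ), F τ ∂volume := by
    intro F
    rw [← Set.Ioc_union_Ioi_eq_Ioi (zero_le_one (α := ℝ)),
      lintegral_union measurableSet_Ioi hdisj10]
  -- final assembly
  rw [hNorm, hB,
    hsplit01 (fun τ => ENNReal.ofReal (φ ((distrib a (fun t => 1 + h t) τ).toReal))),
    hsplit01 (fun τ =>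
      ENNReal.ofReal (1 - φ (a - (distrib a ((negSet a h).indicator h) τ).toReal))),
    hCOV, hBIoi, hNormIoc, hrefl, hA, add_zero, add_right_comm, hsum]


/-- For `φ` increasing, concave, continuous on `[0,a]`, `φ 0 = 0`,
`φ a = 1`, and measurable `h` with `|h| ≤ 1` a.e.:
`‖1 + h‖_{Λ(φ)} = 1 + ∫₀^{m E₊} (h χ_{E₊})* dφ(t) + ∫₀^{m E₋} (h χ_{E₋})* dφ(a−t)` and
`‖1 − h‖_{Λ(φ)} = 1 + ∫₀^{m E₋} (h χ_{E₋})* dφ(t) + ∫₀^{m E₊} (h χ_{E₊})* dφ(a−t)`.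
The (nonpositive) integrals `∫₀^b g dφ(a−t)` equal `−∫₀^b g dψ` for the increasing
integrator `ψ(t) = −φ(a−t)`; accordingly they are moved to the left-hand sides below. -/
theorem lorentz_norm_one_pm_h (a : ℝ) (ha : 0 < a) (φ : ℝ → ℝ)
    (hconc : ConcaveOn ℝ (Set.Icc 0 a) φ)
    (hcont : ContinuousOn φ (Set.Icc 0 a))
    (hmono : MonotoneOn φ (Set.Icc 0 a))
    (hφ0 : φ 0 = 0) (hφa : φ a = 1)
    (h : ℝ → ℝ) (hm : Measurable h)
    (hb : ∀ᵐ t ∂(volume.restrict (Set.Icc (0:ℝ) a)), |h t| ≤ 1) :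
    (eLorentzNorm φ a (fun t => 1 + h t) +
        (∫⁻ t in Set.Ioc (0:ℝ) ((volume (negSet a h)).toReal),
          ENNReal.ofReal (rearr a ((negSet a h).indicator h) t)
            ∂(stieltjesOfOn (fun s => -φ (a - s)) a).measure) =
      1 + ∫⁻ t in Set.Ioc (0:ℝ) ((volume (posSet a h)).toReal),
          ENNReal.ofReal (rearr a ((posSet a h).indicator h) t)
            ∂(stieltjesOfOn φ a).measure) ∧
    (eLorentzNorm φ a (fun t => 1 - h t) +
        (∫⁻ t in Set.Ioc (0:ℝ) ((volume (posSet a h)).toReal),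
          ENNReal.ofReal (rearr a ((posSet a h).indicator h) t)
            ∂(stieltjesOfOn (fun s => -φ (a - s)) a).measure) =
      1 + ∫⁻ t in Set.Ioc (0:ℝ) ((volume (negSet a h)).toReal),
          ENNReal.ofReal (rearr a ((negSet a h).indicator h) t)
            ∂(stieltjesOfOn φ a).measure) := by
  constructor
  · exact main_identity a ha φ hcont hmono hφ0 hφa h hm hb
  · have hb2 : ∀ᵐ t ∂(volume.restrict (Set.Icc (0:ℝ) a)), |(fun t => -h t) t| ≤ 1 := by
      filter_upwards [hb] with t ht
      simpa using ht
    have hneg := main_identity a ha φ hcont hmono hφ0 hφa (fun t => -h t) hm.neg hb2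
    have hps : posSet a (fun t => -h t) = negSet a h := by
      ext t
      simp only [posSet, negSet, Set.mem_setOf_eq, neg_pos]
    have hns : negSet a (fun t => -h t) = posSet a h := by
      ext t
      simp only [posSet, negSet, Set.mem_setOf_eq, neg_lt_zero]
    rw [hps, hns] at hneg
    have hnorm : ∀ (E : Set ℝ) (s : ℝ),
        ‖E.indicator (fun t => -h t) s‖ = ‖E.indicator h s‖ := by
      intro E s
      by_cases hsE : s ∈ E
      · rw [Set.indicator_of_mem hsE, Set.indicator_of_mem hsE, norm_neg]
      · rw [Set.indicator_of_notMem hsE, Set.indicator_of_notMem hsE]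
    have hdist : ∀ (E : Set ℝ) (τ : ℝ),
        distrib a (E.indicator (fun t => -h t)) τ = distrib a (E.indicator h) τ := by
      intro E τ
      unfold distrib
      congr 1
      ext s
      simp only [Set.mem_setOf_eq, hnorm]
    have hrearr : ∀ (E : Set ℝ),
        rearr a (E.indicator (fun t => -h t)) = rearr a (E.indicator h) := by
      intro E
      funext t
      unfold rearr
      simp_rw [hdist]
    rw [hrearr, hrearr] at hneg
    simp only [← sub_eq_add_neg] at hneg
    exact hneg


end
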